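/- arXiv:2108.01110 — 3 statements merged into one kernel-verified Lean document; each statement's English description precedes it below -/
import Mathlib

section
/- Let S be an m×m symmetric positive definite real matrix and H an m×n real matrix with H^T S H nonzero. Then the generalized condition number of H^T S H (ratio of largest eigenvalue to smallest nonzero eigenvalue) satisfies κ(H^T S H) ≤ κ(H)^2 · κ(S), where κ(H) is the ratio of the largest singular value of H to its smallest nonzero singular value and κ(S) = λ_max(S)/λ_min(S). -/
open Matrix

/-- The set of eigenvalues of a real square matrix. -/
noncomputable def eigs {m : ℕ} (A : Matrix (Fin m) (Fin m) ℝ) : Set ℝ :=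
  {μ | ∃ v : Fin m → ℝ, v ≠ 0 ∧ A.mulVec v = μ • v}

noncomputable def lamMax {m : ℕ} (A : Matrix (Fin m) (Fin m) ℝ) : ℝ := sSup (eigs A)

noncomputable def lamMin {m : ℕ} (A : Matrix (Fin m) (Fin m) ℝ) : ℝ := sInf (eigs A)

/-- smallest nonzero eigenvalue -/
noncomputable def lamMinNZ {m : ℕ} (A : Matrix (Fin m) (Fin m) ℝ) : ℝ := sInf (eigs A \ {0})

/-- generalized condition number λ_max / λ*_min of a symmetric PSD matrix -/
noncomputable def condStar {m : ℕ} (A : Matrix (Fin m) (Fin m) ℝ) : ℝ := lamMax A / lamMinNZ A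

/-- generalized condition number σ_max / σ*_min of a rectangular matrix -/
noncomputable def condRect {m n : ℕ} (H : Matrix (Fin m) (Fin n) ℝ) : ℝ :=
  Real.sqrt (lamMax (Hᵀ * H) / lamMinNZ (Hᵀ * H))

/- ## Auxiliary lemmas -/

section Aux

variable {k : ℕ} {A : Matrix (Fin k) (Fin k) ℝ}

lemma dp_pos {v : Fin k → ℝ} (hv : v ≠ 0) : 0 < v ⬝ᵥ v := by
  have := (dotProduct_star_self_pos_iff (v := v)).mpr hv
  simpa using this

/-- `v = U *ᵥ (star U *ᵥ v)` for a unitary `U`. -/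
lemma unitary_mul_star_mulVec (U : Matrix.unitaryGroup (Fin k) ℝ) (v : Fin k → ℝ) :
    (U : Matrix (Fin k) (Fin k) ℝ) *ᵥ ((star (U : Matrix (Fin k) (Fin k) ℝ)) *ᵥ v) = v := by
  rw [mulVec_mulVec, Matrix.mem_unitaryGroup_iff.mp U.2, one_mulVec]

lemma dot_unitary_mulVec (U : Matrix.unitaryGroup (Fin k) ℝ) (v x : Fin k → ℝ) :
    v ⬝ᵥ ((U : Matrix (Fin k) (Fin k) ℝ) *ᵥ x)
      = ((star (U : Matrix (Fin k) (Fin k) ℝ)) *ᵥ v) ⬝ᵥ x := by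
  rw [dotProduct_mulVec]
  congr 1
  have : (star (U : Matrix (Fin k) (Fin k) ℝ)) = (U : Matrix (Fin k) (Fin k) ℝ)ᵀ := by
    ext i j
    simp [Matrix.star_apply, Matrix.transpose_apply]
  rw [this, mulVec_transpose]

lemma quad_eq (hA : A.IsHermitian) (v : Fin k → ℝ) :
    v ⬝ᵥ (A *ᵥ v) = ∑ i, hA.eigenvalues i *
      ((star (hA.eigenvectorUnitary : Matrix (Fin k) (Fin k) ℝ) *ᵥ v) i) ^ 2 := by
  set U := hA.eigenvectorUnitary with hU
  set w := (star (U : Matrix (Fin k) (Fin k) ℝ)) *ᵥ v with hw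
  have hspec := hA.spectral_theorem
  calc v ⬝ᵥ (A *ᵥ v)
      = v ⬝ᵥ ((U : Matrix (Fin k) (Fin k) ℝ) *ᵥ
          ((Matrix.diagonal (RCLike.ofReal ∘ hA.eigenvalues)) *ᵥ w)) := by
        conv_lhs => rw [hspec, Unitary.conjStarAlgAut_apply]
        rw [← mulVec_mulVec, ← mulVec_mulVec]
    _ = w ⬝ᵥ ((Matrix.diagonal (RCLike.ofReal ∘ hA.eigenvalues)) *ᵥ w) :=
        dot_unitary_mulVec U v _
    _ = ∑ i, hA.eigenvalues i * (w i) ^ 2 := by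
        simp only [dotProduct, mulVec_diagonal, Function.comp_apply, RCLike.ofReal_real_eq_id,
          id_eq]
        refine Finset.sum_congr rfl fun i _ => by ring

lemma norm_eq (hA : A.IsHermitian) (v : Fin k → ℝ) :
    v ⬝ᵥ v = ∑ i, ((star (hA.eigenvectorUnitary : Matrix (Fin k) (Fin k) ℝ) *ᵥ v) i) ^ 2 := by
  set U := hA.eigenvectorUnitary with hU
  set w := (star (U : Matrix (Fin k) (Fin k) ℝ)) *ᵥ v with hw
  have h1 : v ⬝ᵥ v = w ⬝ᵥ w := by
    have h2 := dot_unitary_mulVec U v ((star (U : Matrix (Fin k) (Fin k) ℝ)) *ᵥ v)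
    rw [unitary_mul_star_mulVec U v] at h2
    exact h2
  rw [h1]
  simp only [dotProduct]
  exact Finset.sum_congr rfl fun i _ => by ring

lemma eigs_eq_range (hA : A.IsHermitian) : eigs A = Set.range hA.eigenvalues := by
  ext μ
  constructor
  · rintro ⟨v, hv0, hveq⟩
    set U := hA.eigenvectorUnitary with hU
    set w := (star (U : Matrix (Fin k) (Fin k) ℝ)) *ᵥ v with hw
    have hwv : (U : Matrix (Fin k) (Fin k) ℝ) *ᵥ w = v := unitary_mul_star_mulVec U v
    have hw0 : w ≠ 0 := by
      intro h
      apply hv0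
      rw [← hwv, h, mulVec_zero]
    have hDw : (Matrix.diagonal (RCLike.ofReal ∘ hA.eigenvalues)) *ᵥ w = μ • w := by
      have h2 : (star (U : Matrix (Fin k) (Fin k) ℝ)) * A * (U : Matrix (Fin k) (Fin k) ℝ)
          = Matrix.diagonal (RCLike.ofReal ∘ hA.eigenvalues) :=
        (Unitary.conjStarAlgAut_star_apply _ _).symm.trans hA.conjStarAlgAut_star_eigenvectorUnitary
      calc (Matrix.diagonal (RCLike.ofReal ∘ hA.eigenvalues)) *ᵥ w
          = ((star (U : Matrix (Fin k) (Fin k) ℝ)) * A * (U : Matrix (Fin k) (Fin k) ℝ)) *ᵥ w := by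
            rw [h2]
        _ = (star (U : Matrix (Fin k) (Fin k) ℝ)) *ᵥ (A *ᵥ ((U : Matrix (Fin k) (Fin k) ℝ) *ᵥ w)) := by
            rw [← mulVec_mulVec, ← mulVec_mulVec]
        _ = (star (U : Matrix (Fin k) (Fin k) ℝ)) *ᵥ (A *ᵥ v) := by rw [hwv]
        _ = (star (U : Matrix (Fin k) (Fin k) ℝ)) *ᵥ (μ • v) := by rw [hveq]
        _ = μ • w := by rw [mulVec_smul]
    obtain ⟨i, hi⟩ := Function.ne_iff.mp hw0
    have := congrFun hDw i
    simp only [mulVec_diagonal, Function.comp_apply, RCLike.ofReal_real_eq_id, id_eq,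
      Pi.smul_apply, smul_eq_mul] at this
    exact ⟨i, mul_right_cancel₀ hi this⟩
  · rintro ⟨i, rfl⟩
    exact ⟨hA.eigenvectorBasis i, by simpa using hA.eigenvectorBasis.orthonormal.ne_zero i,
      hA.mulVec_eigenvectorBasis i⟩

lemma eigs_finite (hA : A.IsHermitian) : (eigs A).Finite := by
  rw [eigs_eq_range hA]; exact Set.finite_range _

lemma eigs_nonempty (hA : A.IsHermitian) (hk : k ≠ 0) : (eigs A).Nonempty := by
  rw [eigs_eq_range hA]
  exact ⟨hA.eigenvalues ⟨0, Nat.pos_of_ne_zero hk⟩, Set.mem_range_self _⟩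

lemma lamMax_mem (hA : A.IsHermitian) (hk : k ≠ 0) : lamMax A ∈ eigs A :=
  (eigs_nonempty hA hk).csSup_mem (eigs_finite hA)

lemma le_lamMax (hA : A.IsHermitian) (hk : k ≠ 0) (v : Fin k → ℝ) :
    v ⬝ᵥ (A *ᵥ v) ≤ lamMax A * (v ⬝ᵥ v) := by
  rw [quad_eq hA v, norm_eq hA v, Finset.mul_sum]
  refine Finset.sum_le_sum fun i _ => ?_
  refine mul_le_mul_of_nonneg_right ?_ (sq_nonneg _)
  refine le_csSup ((eigs_finite hA).bddAbove) ?_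
  rw [eigs_eq_range hA]; exact Set.mem_range_self _

lemma lamMin_le (hA : A.IsHermitian) (v : Fin k → ℝ) :
    lamMin A * (v ⬝ᵥ v) ≤ v ⬝ᵥ (A *ᵥ v) := by
  rw [quad_eq hA v, norm_eq hA v, Finset.mul_sum]
  refine Finset.sum_le_sum fun i _ => ?_
  refine mul_le_mul_of_nonneg_right ?_ (sq_nonneg _)
  refine csInf_le ((eigs_finite hA).bddBelow) ?_
  rw [eigs_eq_range hA]; exact Set.mem_range_self _

lemma lamMinNZ_rayleigh (hA : A.IsHermitian) (v : Fin k → ℝ)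
    (hv : ∀ i, hA.eigenvalues i = 0 →
      (star (hA.eigenvectorUnitary : Matrix (Fin k) (Fin k) ℝ) *ᵥ v) i = 0) :
    lamMinNZ A * (v ⬝ᵥ v) ≤ v ⬝ᵥ (A *ᵥ v) := by
  rw [quad_eq hA v, norm_eq hA v, Finset.mul_sum]
  refine Finset.sum_le_sum fun i _ => ?_
  by_cases h0 : hA.eigenvalues i = 0
  · rw [hv i h0, h0]; simp
  · refine mul_le_mul_of_nonneg_right ?_ (sq_nonneg _)
    refine csInf_le ((eigs_finite hA).diff).bddBelow ?_
    constructor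
    · rw [eigs_eq_range hA]; exact Set.mem_range_self _
    · simpa using h0

lemma eigs_nonneg_of_posSemidef (hA : A.PosSemidef) {μ : ℝ} (hμ : μ ∈ eigs A) : 0 ≤ μ := by
  obtain ⟨v, hv0, hveq⟩ := hμ
  have h1 : μ * (v ⬝ᵥ v) = v ⬝ᵥ (A *ᵥ v) := by
    rw [hveq, dotProduct_smul, smul_eq_mul]
  have h2 : 0 ≤ v ⬝ᵥ (A *ᵥ v) := by simpa using hA.dotProduct_mulVec_nonneg v
  have h3 : 0 < v ⬝ᵥ v := dp_pos hv0
  nlinarith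

end Aux

theorem stmt0 {m n : ℕ} (S : Matrix (Fin m) (Fin m) ℝ) (H : Matrix (Fin m) (Fin n) ℝ)
    (hS : S.PosDef) (hne : Hᵀ * S * H ≠ 0) :
    condStar (Hᵀ * S * H) ≤ condRect H ^ 2 * (lamMax S / lamMin S) := by
  classical
  -- basic setup
  have hHT : Hᴴ = Hᵀ := by ext i j; simp [conjTranspose_apply]
  have hH0 : H ≠ 0 := by
    intro h; apply hne; rw [h]; simp
  have hm : m ≠ 0 := by
    rintro rfl; exact hH0 (by ext i j; exact absurd i.2 (by simp))
  have hn : n ≠ 0 := by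
    rintro rfl; exact hH0 (by ext i j; exact absurd j.2 (by simp))
  set G := Hᵀ * H with hGdef
  set M := Hᵀ * S * H with hMdef
  have hGps : G.PosSemidef := by
    have := posSemidef_conjTranspose_mul_self H
    rwa [hHT] at this
  have hMps : M.PosSemidef := by
    have := hS.posSemidef.conjTranspose_mul_mul_same H
    rwa [hHT] at this
  have hG0 : G ≠ 0 := by
    intro h
    apply hH0
    ext i j
    have hdiag : (∑ l, H l j * H l j) = 0 := by
      have := congrFun (congrFun h j) j
      simpa [hGdef, Matrix.mul_apply, Matrix.transpose_apply] using this
    have : ∀ l ∈ Finset.univ, H l j * H l j = 0 := by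
      refine (Finset.sum_eq_zero_iff_of_nonneg fun l _ => mul_self_nonneg _).mp hdiag
    have := this i (Finset.mem_univ i)
    simpa [mul_self_eq_zero] using this
  -- quadratic form identities
  have quadM : ∀ u v : Fin n → ℝ, u ⬝ᵥ (M *ᵥ v) = (H *ᵥ u) ⬝ᵥ (S *ᵥ (H *ᵥ v)) := by
    intro u v
    rw [hMdef, ← mulVec_mulVec, ← mulVec_mulVec, dotProduct_mulVec, vecMul_transpose]
  have quadG : ∀ u v : Fin n → ℝ, u ⬝ᵥ (G *ᵥ v) = (H *ᵥ u) ⬝ᵥ (H *ᵥ v) := by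
    intro u v
    rw [hGdef, ← mulVec_mulVec, dotProduct_mulVec, vecMul_transpose]
  -- positivity facts for S
  have hSmin_mem : lamMin S ∈ eigs S :=
    (eigs_nonempty hS.1 hm).csInf_mem (eigs_finite hS.1)
  have hS_eigs_pos : ∀ μ ∈ eigs S, 0 < μ := by
    intro μ hμ
    rw [eigs_eq_range hS.1] at hμ
    obtain ⟨i, rfl⟩ := hμ
    exact hS.eigenvalues_pos i
  have htpos : 0 < lamMin S := hS_eigs_pos _ hSmin_mem
  have hSmax_mem : lamMax S ∈ eigs S :=
    (eigs_nonempty hS.1 hm).csSup_mem (eigs_finite hS.1)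
  have hspos : 0 < lamMax S := hS_eigs_pos _ hSmax_mem
  -- nonzero eigenvalue sets are nonempty
  have hMnz_ne : (eigs M \ {0}).Nonempty := by
    obtain ⟨v, t, ht, hv, heq⟩ := hMps.1.exists_eigenvector_of_ne_zero hne
    exact ⟨t, ⟨v, hv, heq⟩, by simpa using ht⟩
  have hGnz_ne : (eigs G \ {0}).Nonempty := by
    obtain ⟨v, t, ht, hv, heq⟩ := hGps.1.exists_eigenvector_of_ne_zero hG0
    exact ⟨t, ⟨v, hv, heq⟩, by simpa using ht⟩
  have hMnz_mem : lamMinNZ M ∈ eigs M \ {0} :=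
    hMnz_ne.csInf_mem ((eigs_finite hMps.1).diff)
  have hGnz_mem : lamMinNZ G ∈ eigs G \ {0} :=
    hGnz_ne.csInf_mem ((eigs_finite hGps.1).diff)
  have hqpos : 0 < lamMinNZ G :=
    lt_of_le_of_ne (eigs_nonneg_of_posSemidef hGps hGnz_mem.1)
      (Ne.symm (by simpa using hGnz_mem.2))
  have hbpos : 0 < lamMinNZ M :=
    lt_of_le_of_ne (eigs_nonneg_of_posSemidef hMps hMnz_mem.1)
      (Ne.symm (by simpa using hMnz_mem.2))
  -- lamMax G
  have hGmax_mem : lamMax G ∈ eigs G :=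
    (eigs_nonempty hGps.1 hn).csSup_mem (eigs_finite hGps.1)
  have hq_le_p : lamMinNZ G ≤ lamMax G :=
    le_csSup (eigs_finite hGps.1).bddAbove hGnz_mem.1
  have hppos : 0 < lamMax G := lt_of_lt_of_le hqpos hq_le_p
  -- Step 1: lamMax M ≤ lamMax S * lamMax G
  have step1 : lamMax M ≤ lamMax S * lamMax G := by
    obtain ⟨v, hv0, hveq⟩ := lamMax_mem hMps.1 hn
    have hd : 0 < v ⬝ᵥ v := dp_pos hv0
    have h1 : lamMax M * (v ⬝ᵥ v) = (H *ᵥ v) ⬝ᵥ (S *ᵥ (H *ᵥ v)) := by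
      rw [← quadM v v, hveq, dotProduct_smul, smul_eq_mul]
    have h2 : (H *ᵥ v) ⬝ᵥ (S *ᵥ (H *ᵥ v)) ≤ lamMax S * ((H *ᵥ v) ⬝ᵥ (H *ᵥ v)) :=
      le_lamMax hS.1 hm _
    have h3 : (H *ᵥ v) ⬝ᵥ (H *ᵥ v) = v ⬝ᵥ (G *ᵥ v) := (quadG v v).symm
    have h4 : v ⬝ᵥ (G *ᵥ v) ≤ lamMax G * (v ⬝ᵥ v) := le_lamMax hGps.1 hn v
    have : lamMax M * (v ⬝ᵥ v) ≤ (lamMax S * lamMax G) * (v ⬝ᵥ v) := by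
      calc lamMax M * (v ⬝ᵥ v) = (H *ᵥ v) ⬝ᵥ (S *ᵥ (H *ᵥ v)) := h1
        _ ≤ lamMax S * ((H *ᵥ v) ⬝ᵥ (H *ᵥ v)) := h2
        _ = lamMax S * (v ⬝ᵥ (G *ᵥ v)) := by rw [h3]
        _ ≤ lamMax S * (lamMax G * (v ⬝ᵥ v)) :=
            mul_le_mul_of_nonneg_left h4 hspos.le
        _ = (lamMax S * lamMax G) * (v ⬝ᵥ v) := by ring
    exact le_of_mul_le_mul_right this hd
  -- Step 2: lamMin S * lamMinNZ G ≤ lamMinNZ M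
  have step2 : lamMin S * lamMinNZ G ≤ lamMinNZ M := by
    obtain ⟨⟨v, hv0, hveq⟩, hb0'⟩ := hMnz_mem
    have hb0 : lamMinNZ M ≠ 0 := by simpa using hb0'
    have hd : 0 < v ⬝ᵥ v := dp_pos hv0
    -- orthogonality: components of v along kernel of G vanish
    have horth : ∀ i, hGps.1.eigenvalues i = 0 →
        (star (hGps.1.eigenvectorUnitary : Matrix (Fin n) (Fin n) ℝ) *ᵥ v) i = 0 := by
      intro i hi
      set u : Fin n → ℝ := ⇑(hGps.1.eigenvectorBasis i) with hu
      have hwi : (star (hGps.1.eigenvectorUnitary : Matrix (Fin n) (Fin n) ℝ) *ᵥ v) i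
          = u ⬝ᵥ v := by
        simp only [mulVec, dotProduct, Matrix.star_apply,
          Matrix.IsHermitian.eigenvectorUnitary_apply, hu, star_trivial]
      have hGu : G *ᵥ u = 0 := by
        rw [hu, hGps.1.mulVec_eigenvectorBasis, hi, zero_smul]
      have hHu : H *ᵥ u = 0 := by
        have : (H *ᵥ u) ⬝ᵥ (H *ᵥ u) = 0 := by
          rw [← quadG u u, hGu, dotProduct_zero]
        exact dotProduct_self_eq_zero.mp this
      have hkey : lamMinNZ M * (u ⬝ᵥ v) = 0 := by
        have h1 : u ⬝ᵥ (M *ᵥ v) = (H *ᵥ u) ⬝ᵥ (S *ᵥ (H *ᵥ v)) := quadM u v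
        rw [hHu, zero_dotProduct] at h1
        rw [hveq, dotProduct_smul, smul_eq_mul] at h1
        exact h1
      rw [hwi]
      exact (mul_eq_zero.mp hkey).resolve_left hb0
    have h1 : lamMinNZ M * (v ⬝ᵥ v) = (H *ᵥ v) ⬝ᵥ (S *ᵥ (H *ᵥ v)) := by
      rw [← quadM v v, hveq, dotProduct_smul, smul_eq_mul]
    have h2 : lamMin S * ((H *ᵥ v) ⬝ᵥ (H *ᵥ v)) ≤ (H *ᵥ v) ⬝ᵥ (S *ᵥ (H *ᵥ v)) :=
      lamMin_le hS.1 _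
    have h3 : (H *ᵥ v) ⬝ᵥ (H *ᵥ v) = v ⬝ᵥ (G *ᵥ v) := (quadG v v).symm
    have h4 : lamMinNZ G * (v ⬝ᵥ v) ≤ v ⬝ᵥ (G *ᵥ v) := lamMinNZ_rayleigh hGps.1 v horth
    have : (lamMin S * lamMinNZ G) * (v ⬝ᵥ v) ≤ lamMinNZ M * (v ⬝ᵥ v) := by
      calc (lamMin S * lamMinNZ G) * (v ⬝ᵥ v) = lamMin S * (lamMinNZ G * (v ⬝ᵥ v)) := by ring
        _ ≤ lamMin S * (v ⬝ᵥ (G *ᵥ v)) := mul_le_mul_of_nonneg_left h4 htpos.le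
        _ = lamMin S * ((H *ᵥ v) ⬝ᵥ (H *ᵥ v)) := by rw [h3]
        _ ≤ (H *ᵥ v) ⬝ᵥ (S *ᵥ (H *ᵥ v)) := h2
        _ = lamMinNZ M * (v ⬝ᵥ v) := h1.symm
    exact le_of_mul_le_mul_right this hd
  -- conclude
  have hcr : condRect H ^ 2 = lamMax G / lamMinNZ G := by
    have h2 : condRect H = Real.sqrt (lamMax G / lamMinNZ G) := rfl
    rw [h2, Real.sq_sqrt (div_nonneg hppos.le hqpos.le)]
  have hcs : condStar M = lamMax M / lamMinNZ M := rfl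
  rw [hcs, hcr]
  have hmain : lamMax M / lamMinNZ M ≤ (lamMax S * lamMax G) / (lamMin S * lamMinNZ G) :=
    div_le_div₀ (mul_nonneg hspos.le hppos.le) step1 (mul_pos htpos hqpos) step2
  calc lamMax M / lamMinNZ M ≤ (lamMax S * lamMax G) / (lamMin S * lamMinNZ G) := hmain
    _ = lamMax G / lamMinNZ G * (lamMax S / lamMin S) := by
        field_simp
end

section
/- Let Ĥ = [e, H] ∈ ℝ^{N×(n+1)} where e is the all-ones vector in ℝ^N and H ∈ ℝ^{N×n}, and let μ = (1/N)H^T e be the column mean vector. Let U = [[1, -μ^T],[0, I_n]]. If Ĥ has full column rank, then the largest eigenvalue satisfies λ_max(U^T Ĥ^T Ĥ U) ≤ λ_max(Ĥ^T Ĥ). -/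
open Matrix

lemma decomp {m : ℕ} (A : Matrix (Fin m) (Fin m) ℝ) (hA : A.IsHermitian) (x : Fin m → ℝ) :
    x ⬝ᵥ A.mulVec x = ∑ i, hA.eigenvalues i *
        ((star (hA.eigenvectorUnitary : Matrix (Fin m) (Fin m) ℝ) *ᵥ x) i)^2 ∧
    x ⬝ᵥ x = ∑ i, ((star (hA.eigenvectorUnitary : Matrix (Fin m) (Fin m) ℝ) *ᵥ x) i)^2 := by
  set V : Matrix (Fin m) (Fin m) ℝ := (hA.eigenvectorUnitary : Matrix (Fin m) (Fin m) ℝ) with hV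
  have hstar : star V = Vᵀ := rfl
  have hVVt : V * Vᵀ = 1 := by
    rw [← hstar]; exact (Matrix.mem_unitaryGroup_iff).mp hA.eigenvectorUnitary.2
  set y : Fin m → ℝ := star V *ᵥ x with hy
  have hyx : y = x ᵥ* V := by rw [hy, hstar, mulVec_transpose]
  have hVy : V *ᵥ y = x := by
    rw [hy, hstar, mulVec_mulVec, hVVt, one_mulVec]
  constructor
  · conv_lhs => rw [hA.spectral_theorem]
    rw [RCLike.ofReal_real_eq_id]
    simp only [Unitary.conjStarAlgAut_apply, Function.comp_def, id_eq, hstar, ← hV]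
    rw [Matrix.mul_assoc, ← mulVec_mulVec, ← mulVec_mulVec, ← hstar, ← hy,
      dotProduct_mulVec, ← hyx]
    rw [dotProduct]
    refine Finset.sum_congr rfl fun i _ => ?_
    rw [mulVec_diagonal]
    ring
  · conv_lhs => rw [← hVy]
    rw [dotProduct_mulVec, hVy, ← hyx, dotProduct]
    refine Finset.sum_congr rfl fun i _ => by rw [sq]

lemma rayleigh {m : ℕ} (hm : 0 < m) (A : Matrix (Fin m) (Fin m) ℝ) (hA : A.IsHermitian)
    (x : Fin m → ℝ) : x ⬝ᵥ A.mulVec x ≤ lamMax A * (x ⬝ᵥ x) := by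
  have hne : (Finset.univ : Finset (Fin m)).Nonempty := ⟨⟨0, hm⟩, Finset.mem_univ _⟩
  set L : ℝ := Finset.univ.sup' hne hA.eigenvalues with hL
  have hbdd : ∀ μ ∈ eigs A, μ ≤ L := by
    rintro μ ⟨v, hv0, hvA⟩
    have hd := decomp A hA v
    have h1 : μ * (v ⬝ᵥ v) = v ⬝ᵥ A.mulVec v := by
      rw [hvA, dotProduct_smul]; ring_nf
    have hvv : 0 < v ⬝ᵥ v := by
      rcases lt_or_eq_of_le (Finset.sum_nonneg fun i _ => mul_self_nonneg (v i) :
        (0:ℝ) ≤ v ⬝ᵥ v) with h | h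
      · exact h
      · exact absurd ((dotProduct_self_eq_zero).mp h.symm) hv0
    have h2 : v ⬝ᵥ A.mulVec v ≤ L * (v ⬝ᵥ v) := by
      rw [hd.1, hd.2, Finset.mul_sum]
      refine Finset.sum_le_sum fun i _ => ?_
      exact mul_le_mul_of_nonneg_right (Finset.le_sup' _ (Finset.mem_univ i)) (sq_nonneg _)
    nlinarith
  have hLmem : L ∈ eigs A := by
    obtain ⟨i0, -, hi0⟩ := Finset.exists_mem_eq_sup' hne hA.eigenvalues
    rw [hL, hi0]
    exact ⟨hA.eigenvectorBasis i0,
      fun h => hA.eigenvectorBasis.orthonormal.ne_zero i0 (by ext k; exact congrFun h k),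
      hA.mulVec_eigenvectorBasis i0⟩
  have hLlam : L ≤ lamMax A := le_csSup ⟨L, hbdd⟩ hLmem
  have hd := decomp A hA x
  have hxx : 0 ≤ x ⬝ᵥ x := Finset.sum_nonneg fun i _ => mul_self_nonneg (x i)
  calc x ⬝ᵥ A.mulVec x ≤ L * (x ⬝ᵥ x) := by
        rw [hd.1, hd.2, Finset.mul_sum]
        exact Finset.sum_le_sum fun i _ =>
          mul_le_mul_of_nonneg_right (Finset.le_sup' _ (Finset.mem_univ i)) (sq_nonneg _)
  _ ≤ lamMax A * (x ⬝ᵥ x) := mul_le_mul_of_nonneg_right hLlam hxx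

lemma gram {N m : ℕ} (G : Matrix (Fin N) (Fin m) ℝ) (x : Fin m → ℝ) :
    x ⬝ᵥ (Gᵀ * G) *ᵥ x = (G *ᵥ x) ⬝ᵥ (G *ᵥ x) := by
  rw [← mulVec_mulVec, dotProduct_mulVec, vecMul_transpose]

/-- Ĥ = [e, H] : prepend a column of ones to H -/
noncomputable def hatM {N n : ℕ} (H : Matrix (Fin N) (Fin n) ℝ) :
    Matrix (Fin N) (Fin (n + 1)) ℝ :=
  Matrix.of fun i j => Fin.cases (motive := fun _ => ℝ) 1 (fun j' => H i j') j

/-- U = [[1, -μᵀ],[0, I]] : the centering transformation -/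
noncomputable def centerU {n : ℕ} (μ : Fin n → ℝ) : Matrix (Fin (n + 1)) (Fin (n + 1)) ℝ :=
  Matrix.of fun i j =>
    Fin.cases (motive := fun _ => ℝ)
      (Fin.cases (motive := fun _ => ℝ) 1 (fun j' => -μ j') j)
      (fun i' => Fin.cases (motive := fun _ => ℝ) 0 (fun j' => if i' = j' then 1 else 0) j) i

theorem stmt1 {N n : ℕ} (H : Matrix (Fin N) (Fin n) ℝ)
    (μ : Fin n → ℝ) (hμ : ∀ j, μ j = (1 / (N : ℝ)) * ∑ i, H i j)
    (hrank : (hatM H).rank = n + 1) :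
    lamMax ((centerU μ)ᵀ * (hatM H)ᵀ * hatM H * centerU μ) ≤
      lamMax ((hatM H)ᵀ * hatM H) := by
  -- Basic setup
  set A : Matrix (Fin (n+1)) (Fin (n+1)) ℝ := (hatM H)ᵀ * hatM H with hA
  have hAh : A.IsHermitian := by
    have := isHermitian_conjTranspose_mul_self (hatM H)
    rwa [conjTranspose_eq_transpose_of_trivial] at this
  have hNpos : 0 < N := by
    have h1 : (hatM H).rank ≤ N := Matrix.rank_le_card_height (hatM H) |>.trans
      (le_of_eq (Fintype.card_fin N))
    omega
  have hNne : (N : ℝ) ≠ 0 := Nat.cast_ne_zero.mpr hNpos.ne'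
  have sumH : ∀ j, ∑ i, H i j = (N : ℝ) * μ j := by
    intro j; rw [hμ j]; field_simp
  set B : Matrix (Fin N) (Fin (n+1)) ℝ := hatM H * centerU μ with hBdef
  have hM : (centerU μ)ᵀ * (hatM H)ᵀ * hatM H * centerU μ = Bᵀ * B := by
    rw [hBdef, Matrix.transpose_mul, Matrix.mul_assoc, Matrix.mul_assoc]
  have hB0 : ∀ i, B i 0 = 1 := by
    intro i; simp [hBdef, Matrix.mul_apply, hatM, centerU, Fin.sum_univ_succ]
  have hBs : ∀ i j, B i (Fin.succ j) = H i j - μ j := by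
    intro i j
    simp [hBdef, Matrix.mul_apply, hatM, centerU, Fin.sum_univ_succ]
    ring
  -- column sums of centered columns vanish
  have hcol : ∀ j, ∑ i, B i (Fin.succ j) = 0 := by
    intro j
    simp only [hBs]
    rw [Finset.sum_sub_distrib, sumH, Finset.sum_const, Finset.card_univ, Fintype.card_fin,
      nsmul_eq_mul]
    ring
  -- N ≤ lamMax A via Rayleigh at e₀
  have hNle : (N : ℝ) ≤ lamMax A := by
    have hx := rayleigh (Nat.succ_pos n) A hAh (Pi.single 0 1)
    have h1 : (Pi.single (0 : Fin (n+1)) (1:ℝ)) ⬝ᵥ A.mulVec (Pi.single 0 1) = N := by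
      rw [hA, _root_.gram]
      have : hatM H *ᵥ Pi.single (0 : Fin (n+1)) (1:ℝ) = fun _ => 1 := by
        funext i
        simp [Matrix.mulVec, dotProduct_single, hatM]
      rw [this]
      simp [dotProduct]
    have h2 : (Pi.single (0 : Fin (n+1)) (1:ℝ)) ⬝ᵥ (Pi.single (0 : Fin (n+1)) (1:ℝ)) = 1 := by
      simp [single_dotProduct]
    rw [h1, h2, mul_one] at hx
    exact hx
  have hlamnn : (0:ℝ) ≤ lamMax A := le_trans (Nat.cast_nonneg N) hNle
  -- main bound on eigenvalues of Bᵀ * B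
  rw [hM]
  refine Real.sSup_le ?_ hlamnn
  rintro lam ⟨w, hw0, hwEq⟩
  set w' : Fin n → ℝ := fun j => w (Fin.succ j) with hw'def
  by_cases hw' : w' = 0
  · -- first coordinate eigenvector: lam = N
    have hw00 : w 0 ≠ 0 := by
      intro h
      apply hw0
      funext k
      refine Fin.cases ?_ ?_ k
      · exact h
      · intro j; exact congrFun hw' j
    have hrow0 := congrFun hwEq 0
    have hlhs : ((Bᵀ * B) *ᵥ w) 0 = (N : ℝ) * w 0 := by
      rw [← mulVec_mulVec]
      show (Bᵀ *ᵥ (B *ᵥ w)) 0 = (N : ℝ) * w 0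
      have hBw : B *ᵥ w = fun i => w 0 := by
        funext i
        show ∑ k, B i k * w k = w 0
        rw [Fin.sum_univ_succ, hB0]
        have : ∀ j : Fin n, B i (Fin.succ j) * w (Fin.succ j) = 0 := by
          intro j
          have : w (Fin.succ j) = 0 := congrFun hw' j
          rw [this, mul_zero]
        rw [Finset.sum_congr rfl fun j _ => this j]
        simp
      rw [hBw]
      show ∑ i, Bᵀ 0 i * w 0 = (N : ℝ) * w 0
      simp only [Matrix.transpose_apply, hB0]
      rw [← Finset.sum_mul]
      simp
    rw [hlhs] at hrow0
    have : (N : ℝ) = lam := by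
      have h2 : (lam • w) 0 = lam * w 0 := rfl
      rw [h2] at hrow0
      exact mul_right_cancel₀ hw00 hrow0
    rw [← this]
    exact hNle
  · -- centered eigenvector case
    set x : Fin (n+1) → ℝ := fun k => Fin.cases 0 (fun j => w' j) k with hxdef
    have hx0 : x 0 = 0 := rfl
    have hxs : ∀ j, x (Fin.succ j) = w' j := fun j => rfl
    have hxw : x ⬝ᵥ w = w' ⬝ᵥ w' := by
      show ∑ k, x k * w k = _
      rw [Fin.sum_univ_succ, hx0]
      simp [hxs, dotProduct, hw'def]
    have hxx : x ⬝ᵥ x = w' ⬝ᵥ w' := by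
      show ∑ k, x k * x k = _
      rw [Fin.sum_univ_succ, hx0]
      simp [hxs, dotProduct]
    have hww : 0 < w' ⬝ᵥ w' := by
      rcases lt_or_eq_of_le (Finset.sum_nonneg fun i _ => mul_self_nonneg (w' i) :
        (0:ℝ) ≤ w' ⬝ᵥ w') with h | h
      · exact h
      · exact absurd ((dotProduct_self_eq_zero).mp h.symm) hw'
    set t : ℝ := μ ⬝ᵥ w' with htdef
    set c : Fin N → ℝ := fun i => ∑ j, (H i j - μ j) * w' j with hcdef
    set d : Fin N → ℝ := fun i => ∑ j, H i j * w' j with hddef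
    have hcd : ∀ i, c i = d i - t := by
      intro i
      rw [hcdef, hddef, htdef]
      simp only [sub_mul]
      rw [Finset.sum_sub_distrib]
      rfl
    have hsumd : ∑ i, d i = (N : ℝ) * t := by
      rw [hddef, htdef, Finset.sum_comm]
      rw [Finset.sum_congr rfl fun j _ => (Finset.sum_mul ..).symm]
      rw [Finset.sum_congr rfl fun j (_ : j ∈ Finset.univ) => by rw [sumH j]]
      rw [dotProduct, Finset.mul_sum]
      exact Finset.sum_congr rfl fun j _ => by ring
    -- B *ᵥ x = c  and  B *ᵥ w = fun i => w 0 + c i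
    have hBx : B *ᵥ x = c := by
      funext i
      show ∑ k, B i k * x k = c i
      rw [Fin.sum_univ_succ, hx0, mul_zero, zero_add, hcdef]
      exact Finset.sum_congr rfl fun j _ => by rw [hBs, hxs]
    have hBw : B *ᵥ w = fun i => w 0 + c i := by
      funext i
      show ∑ k, B i k * w k = w 0 + c i
      rw [Fin.sum_univ_succ, hB0, one_mul, hcdef]
      congr 1
      exact Finset.sum_congr rfl fun j _ => by rw [hBs]
    have hsumc : ∑ i, c i = 0 := by
      have : ∀ i, c i = ∑ j, B i (Fin.succ j) * w' j := by
        intro i; rw [hcdef]; exact Finset.sum_congr rfl fun j _ => by rw [hBs]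
      rw [Finset.sum_congr rfl fun i _ => this i, Finset.sum_comm]
      rw [Finset.sum_congr rfl fun j _ => (Finset.sum_mul ..).symm]
      rw [Finset.sum_congr rfl fun j (_ : j ∈ Finset.univ) => by rw [hcol j]]
      simp
    -- lam * (w'⬝w') = ∑ c i ^ 2
    have hkey : lam * (w' ⬝ᵥ w') = ∑ i, (c i)^2 := by
      have h1 : x ⬝ᵥ ((Bᵀ * B) *ᵥ w) = lam * (w' ⬝ᵥ w') := by
        rw [hwEq]
        have : x ⬝ᵥ (lam • w) = lam * (x ⬝ᵥ w) := by
          rw [dotProduct_smul]; rfl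
        rw [this, hxw]
      have h2 : x ⬝ᵥ ((Bᵀ * B) *ᵥ w) = (B *ᵥ x) ⬝ᵥ (B *ᵥ w) := by
        rw [← mulVec_mulVec, dotProduct_mulVec, vecMul_transpose]
      rw [h2, hBx, hBw] at h1
      rw [← h1, dotProduct]
      have : ∀ i : Fin N, c i * (w 0 + c i) = w 0 * c i + (c i)^2 := fun i => by ring
      rw [Finset.sum_congr rfl fun i _ => this i, Finset.sum_add_distrib,
        ← Finset.mul_sum, hsumc, mul_zero, zero_add]
    -- ∑ c² ≤ ∑ d²
    have hcle : ∑ i, (c i)^2 ≤ ∑ i, (d i)^2 := by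
      have hdiff : ∑ i, (d i)^2 - ∑ i, (c i)^2 = (N:ℝ) * t^2 := by
        rw [← Finset.sum_sub_distrib]
        have : ∀ i : Fin N, (d i)^2 - (c i)^2 = 2 * t * d i - t^2 := by
          intro i; rw [hcd i]; ring
        rw [Finset.sum_congr rfl fun i _ => this i, Finset.sum_sub_distrib,
          ← Finset.mul_sum, hsumd, Finset.sum_const, Finset.card_univ, Fintype.card_fin,
          nsmul_eq_mul]
        ring
      nlinarith [mul_nonneg (Nat.cast_nonneg (α := ℝ) N) (sq_nonneg t)]
    -- ∑ d² = x ⬝ᵥ A x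
    have hdA : x ⬝ᵥ A.mulVec x = ∑ i, (d i)^2 := by
      rw [hA, _root_.gram]
      have : hatM H *ᵥ x = d := by
        funext i
        show ∑ k, hatM H i k * x k = d i
        rw [Fin.sum_univ_succ, hx0, mul_zero, zero_add, hddef]
        exact Finset.sum_congr rfl fun j _ => by rw [hxs]; simp [hatM]
      rw [this, dotProduct]
      exact Finset.sum_congr rfl fun i _ => (sq (d i)).symm
    have hray := rayleigh (Nat.succ_pos n) A hAh x
    rw [hdA, hxx] at hray
    have : lam * (w' ⬝ᵥ w') ≤ lamMax A * (w' ⬝ᵥ w') := by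
      rw [hkey]; exact le_trans hcle hray
    exact le_of_mul_le_mul_right this hww
end

section
/- (van der Sluis) Let A ∈ ℝ^{m×n} have full column rank and let D = diag(‖a_1‖^{-1}, ..., ‖a_n‖^{-1}), where a_i is the i-th column of A. Then κ(AD) ≤ √n · min over all invertible diagonal matrices D_0 of κ(A D_0), where κ is the 2-norm condition number. -/
open Matrix

/-- 2-norm condition number σ_max/σ_min of a full column rank matrix -/
noncomputable def condFull {m n : ℕ} (A : Matrix (Fin m) (Fin n) ℝ) : ℝ :=
  Real.sqrt (lamMax (Aᵀ * A) / lamMin (Aᵀ * A))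

section Spectral

variable {n : ℕ} {M : Matrix (Fin n) (Fin n) ℝ}

lemma inner_eq_dot (x y : EuclideanSpace ℝ (Fin n)) :
    (inner ℝ x y : ℝ) = (x : Fin n → ℝ) ⬝ᵥ (y : Fin n → ℝ) := by
  simp [PiLp.inner_apply, dotProduct, RCLike.inner_apply, mul_comm]

lemma dot_sym (hM : M.IsHermitian) (x y : Fin n → ℝ) :
    x ⬝ᵥ (M *ᵥ y) = (M *ᵥ x) ⬝ᵥ y := by
  rw [Matrix.dotProduct_mulVec, ← Matrix.mulVec_transpose]
  congr 1
  rw [show Mᵀ = M from hM]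

lemma eigs_eq_range_s5 (hM : M.IsHermitian) : eigs M = Set.range hM.eigenvalues := by
  ext μ
  constructor
  · rintro ⟨v, hv, hMv⟩
    set b := hM.eigenvectorBasis with hb
    have hvE : (WithLp.toLp 2 v : EuclideanSpace ℝ (Fin n)) ≠ 0 := by simpa using hv
    have hex : ∃ i, (inner ℝ (b i) (WithLp.toLp 2 v : EuclideanSpace ℝ (Fin n)) : ℝ) ≠ 0 := by
      by_contra h
      push_neg at h
      apply hvE
      have : b.repr (WithLp.toLp 2 v) = 0 := by
        ext i
        simpa [b.repr_apply_apply] using h i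
      simpa using b.repr.map_eq_zero_iff.mp this
    obtain ⟨i, hi⟩ := hex
    refine ⟨i, ?_⟩
    have h1 : ((b i : Fin n → ℝ)) ⬝ᵥ (M *ᵥ v) = hM.eigenvalues i * ((b i : Fin n → ℝ) ⬝ᵥ v) := by
      rw [dot_sym hM,
        show M *ᵥ (b i : Fin n → ℝ) = hM.eigenvalues i • (b i : Fin n → ℝ) from
          hM.mulVec_eigenvectorBasis i,
        smul_dotProduct, smul_eq_mul]
    have h2 : ((b i : Fin n → ℝ)) ⬝ᵥ (M *ᵥ v) = μ * ((b i : Fin n → ℝ) ⬝ᵥ v) := by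
      rw [hMv, dotProduct_smul]; rfl
    have hne : ((b i : Fin n → ℝ) ⬝ᵥ v) ≠ 0 := by
      rwa [inner_eq_dot] at hi
    have := h1.symm.trans h2
    exact mul_right_cancel₀ hne this
  · rintro ⟨i, rfl⟩
    exact ⟨hM.eigenvectorBasis i, (by simpa using hM.eigenvectorBasis.orthonormal.ne_zero i),
      hM.mulVec_eigenvectorBasis i⟩

lemma eigs_finite_s5 (hM : M.IsHermitian) : (eigs M).Finite := by
  rw [eigs_eq_range_s5 hM]; exact Set.finite_range _

lemma mulVec_eigBasis (hM : M.IsHermitian) (i : Fin n) :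
    M *ᵥ (hM.eigenvectorBasis i : Fin n → ℝ)
      = hM.eigenvalues i • (hM.eigenvectorBasis i : Fin n → ℝ) :=
  hM.mulVec_eigenvectorBasis i

lemma expansion (hM : M.IsHermitian) (v : Fin n → ℝ) :
    v ⬝ᵥ (M *ᵥ v) = ∑ i, hM.eigenvalues i * ((hM.eigenvectorBasis i : Fin n → ℝ) ⬝ᵥ v) ^ 2 := by
  have h := hM.eigenvectorBasis.sum_inner_mul_inner (WithLp.toLp 2 v : EuclideanSpace ℝ (Fin n))
    (WithLp.toLp 2 (M *ᵥ v : Fin n → ℝ) : EuclideanSpace ℝ (Fin n))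
  simp only [inner_eq_dot, WithLp.ofLp_toLp] at h
  rw [← h]
  apply Finset.sum_congr rfl
  intro i _
  rw [dotProduct_comm v, dot_sym hM, mulVec_eigBasis hM,
    smul_dotProduct, smul_eq_mul]
  ring

lemma sum_sq_expansion (hM : M.IsHermitian) (v : Fin n → ℝ) :
    ∑ i, v i ^ 2 = ∑ i, ((hM.eigenvectorBasis i : Fin n → ℝ) ⬝ᵥ v) ^ 2 := by
  have h := hM.eigenvectorBasis.sum_inner_mul_inner (WithLp.toLp 2 v : EuclideanSpace ℝ (Fin n))
    (WithLp.toLp 2 v : EuclideanSpace ℝ (Fin n))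
  simp only [inner_eq_dot, WithLp.ofLp_toLp] at h
  have hv : v ⬝ᵥ v = ∑ i, v i ^ 2 := by simp [dotProduct, sq]
  rw [← hv, ← h]
  apply Finset.sum_congr rfl
  intro i _
  rw [dotProduct_comm v]
  ring

lemma eigval_le_lamMax (hM : M.IsHermitian) (i : Fin n) : hM.eigenvalues i ≤ lamMax M :=
  le_csSup (eigs_finite_s5 hM).bddAbove (by rw [eigs_eq_range_s5 hM]; exact ⟨i, rfl⟩)

lemma lamMin_le_eigval (hM : M.IsHermitian) (i : Fin n) : lamMin M ≤ hM.eigenvalues i :=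
  csInf_le (eigs_finite_s5 hM).bddBelow (by rw [eigs_eq_range_s5 hM]; exact ⟨i, rfl⟩)

lemma rayleigh_le (hM : M.IsHermitian) (v : Fin n → ℝ) :
    v ⬝ᵥ (M *ᵥ v) ≤ lamMax M * ∑ i, v i ^ 2 := by
  rw [expansion hM v, sum_sq_expansion hM v, Finset.mul_sum]
  exact Finset.sum_le_sum fun i _ =>
    mul_le_mul_of_nonneg_right (eigval_le_lamMax hM i) (sq_nonneg _)

lemma le_rayleigh (hM : M.IsHermitian) (v : Fin n → ℝ) :
    lamMin M * ∑ i, v i ^ 2 ≤ v ⬝ᵥ (M *ᵥ v) := by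
  rw [expansion hM v, sum_sq_expansion hM v, Finset.mul_sum]
  exact Finset.sum_le_sum fun i _ =>
    mul_le_mul_of_nonneg_right (lamMin_le_eigval hM i) (sq_nonneg _)

end Spectral

section Aux

lemma sumsq_pos {n : ℕ} {v : Fin n → ℝ} (hv : v ≠ 0) : 0 < ∑ i, v i ^ 2 := by
  obtain ⟨i, hi⟩ := Function.ne_iff.mp hv
  exact Finset.sum_pos' (fun j _ => sq_nonneg _)
    ⟨i, Finset.mem_univ i, by simpa using pow_pos (abs_pos.mpr hi) 2⟩

lemma dot_gram {m n : ℕ} (X : Matrix (Fin m) (Fin n) ℝ) (v : Fin n → ℝ) :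
    v ⬝ᵥ ((Xᵀ * X) *ᵥ v) = ∑ i, ((X *ᵥ v) i) ^ 2 := by
  rw [← Matrix.mulVec_mulVec, Matrix.dotProduct_mulVec, Matrix.vecMul_transpose]
  simp [dotProduct, sq]

lemma gram_herm {m n : ℕ} (X : Matrix (Fin m) (Fin n) ℝ) : (Xᵀ * X).IsHermitian := by
  have := Matrix.isHermitian_conjTranspose_mul_self X
  rwa [Matrix.conjTranspose_eq_transpose_of_trivial] at this

lemma eig_mul {m n : ℕ} (X : Matrix (Fin m) (Fin n) ℝ) {μ : ℝ} {v : Fin n → ℝ}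
    (hMv : (Xᵀ * X) *ᵥ v = μ • v) :
    μ * ∑ i, v i ^ 2 = ∑ i, ((X *ᵥ v) i) ^ 2 := by
  have h : v ⬝ᵥ (μ • v) = μ * ∑ i, v i ^ 2 := by
    simp [dotProduct, Finset.mul_sum, sq]
    apply Finset.sum_congr rfl
    intro i _
    ring
  rw [← h, ← hMv, dot_gram]

end Aux

lemma key {m n : ℕ} (hn : 0 < n) (A : Matrix (Fin m) (Fin n) ℝ)
    (hker : ∀ v : Fin n → ℝ, A *ᵥ v = 0 → v = 0)
    (hcolN : ∀ j, 0 < ∑ i, A i j ^ 2)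
    (D : Fin n → ℝ) (hD : ∀ j, D j = (Real.sqrt (∑ i, (A i j) ^ 2))⁻¹)
    (d : Fin n → ℝ) (hd : ∀ j, d j ≠ 0) :
    condFull (A * Matrix.diagonal D) ≤ Real.sqrt n * condFull (A * Matrix.diagonal d) := by
  haveI : Nonempty (Fin n) := ⟨⟨0, hn⟩⟩
  set B := A * Matrix.diagonal D with hBdef
  set C := A * Matrix.diagonal d with hCdef
  have hMD : (Bᵀ * B).IsHermitian := gram_herm B
  have hMd : (Cᵀ * C).IsHermitian := gram_herm C
  have hDpos : ∀ j, 0 < D j := fun j => by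
    rw [hD j]; exact inv_pos.mpr (Real.sqrt_pos.mpr (hcolN j))
  have hD2 : ∀ j, D j ^ 2 * (∑ i, A i j ^ 2) = 1 := fun j => by
    rw [hD j, inv_pow, Real.sq_sqrt (le_of_lt (hcolN j))]
    exact inv_mul_cancel₀ (hcolN j).ne'
  have hB : ∀ i j, B i j = A i j * D j := fun i j => Matrix.mul_diagonal D A i j
  have hC : ∀ i j, C i j = A i j * d j := fun i j => Matrix.mul_diagonal d A i j
  have hBcol : ∀ j, ∑ i, B i j ^ 2 = 1 := by
    intro j
    have : ∑ i, B i j ^ 2 = D j ^ 2 * ∑ i, A i j ^ 2 := by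
      rw [Finset.mul_sum]
      apply Finset.sum_congr rfl
      intro i _
      rw [hB]; ring
    rw [this, hD2]
  set E := fun j => D j / d j with hEdef
  have hE : ∀ j, E j ≠ 0 := fun j => div_ne_zero (hDpos j).ne' (hd j)
  obtain ⟨k, -, hkmin⟩ := Finset.exists_min_image Finset.univ (fun j => E j ^ 2)
    Finset.univ_nonempty
  set ε := E k ^ 2 with hεdef
  have hε : 0 < ε := by have := hE k; positivity
  have hneD : (eigs (Bᵀ * B)).Nonempty := by
    rw [eigs_eq_range_s5 hMD]; exact Set.range_nonempty _
  have hned : (eigs (Cᵀ * C)).Nonempty := by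
    rw [eigs_eq_range_s5 hMd]; exact Set.range_nonempty _
  -- lamMax (Bᵀ * B) ≤ n
  have hmaxD : lamMax (Bᵀ * B) ≤ n := by
    apply Real.sSup_le _ (Nat.cast_nonneg n)
    rintro μ ⟨v, hv, hMv⟩
    have hS := sumsq_pos hv
    have h1 := eig_mul B hMv
    have h2 : ∑ i, ((B *ᵥ v) i) ^ 2 ≤ n * ∑ j, v j ^ 2 := by
      have hterm : ∀ i, ((B *ᵥ v) i) ^ 2 ≤ n * ∑ j, (B i j * v j) ^ 2 := by
        intro i
        have h := sq_sum_le_card_mul_sum_sq (s := Finset.univ)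
          (f := fun j => B i j * v j)
        simpa [Matrix.mulVec, dotProduct, Finset.card_univ] using h
      calc ∑ i, ((B *ᵥ v) i) ^ 2
          ≤ ∑ i : Fin m, (n * ∑ j, (B i j * v j) ^ 2) :=
            Finset.sum_le_sum fun i _ => hterm i
        _ = n * ∑ j, (∑ i, B i j ^ 2) * v j ^ 2 := by
            rw [← Finset.mul_sum, Finset.sum_comm]
            congr 1
            apply Finset.sum_congr rfl
            intro j _
            rw [Finset.sum_mul]
            apply Finset.sum_congr rfl
            intro i _
            ring
        _ = n * ∑ j, v j ^ 2 := by
            congr 1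
            apply Finset.sum_congr rfl
            intro j _
            rw [hBcol j, one_mul]
    exact le_of_mul_le_mul_right (by linarith) hS
  -- lamMin (Cᵀ * C) > 0
  have hq : 0 < lamMin (Cᵀ * C) := by
    obtain ⟨v, hv, hMv⟩ := hned.csInf_mem (eigs_finite_s5 hMd)
    have hS := sumsq_pos hv
    have h1 : lamMin (Cᵀ * C) * ∑ i, v i ^ 2 = ∑ i, ((C *ᵥ v) i) ^ 2 := eig_mul C hMv
    have hCv : C *ᵥ v ≠ 0 := by
      intro h0
      apply hv
      rw [hCdef, ← Matrix.mulVec_mulVec] at h0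
      have h4 := hker _ h0
      funext j
      have := congrFun h4 j
      rw [Matrix.mulVec_diagonal] at this
      exact (mul_eq_zero.mp this).resolve_left (hd j)
    have h5 := sumsq_pos hCv
    nlinarith
  -- lamMin (Bᵀ * B) ≥ ε * lamMin (Cᵀ * C)
  have hminD : ε * lamMin (Cᵀ * C) ≤ lamMin (Bᵀ * B) := by
    apply le_csInf hneD
    rintro μ ⟨v, hv, hMv⟩
    have hS := sumsq_pos hv
    set w := fun j => E j * v j with hw
    have hBC : B *ᵥ v = C *ᵥ w := by
      have harg : Matrix.diagonal D *ᵥ v = Matrix.diagonal d *ᵥ w := by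
        funext j
        rw [Matrix.mulVec_diagonal, Matrix.mulVec_diagonal]
        have hwj : w j = D j / d j * v j := rfl
        rw [hwj]
        rw [show D j / d j * v j = D j * v j * (d j)⁻¹ from by ring,
          mul_comm (d j), mul_assoc, inv_mul_cancel₀ (hd j), mul_one]
      rw [hBdef, hCdef, ← Matrix.mulVec_mulVec, ← Matrix.mulVec_mulVec, harg]
    have h1 : μ * ∑ i, v i ^ 2 = ∑ i, ((C *ᵥ w) i) ^ 2 := by
      rw [eig_mul B hMv, hBC]
    have h2 : lamMin (Cᵀ * C) * ∑ j, w j ^ 2 ≤ ∑ i, ((C *ᵥ w) i) ^ 2 := by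
      have h := le_rayleigh hMd w
      rwa [dot_gram] at h
    have h3 : ε * ∑ j, v j ^ 2 ≤ ∑ j, w j ^ 2 := by
      rw [Finset.mul_sum]
      apply Finset.sum_le_sum
      intro j _
      calc ε * v j ^ 2 ≤ E j ^ 2 * v j ^ 2 :=
            mul_le_mul_of_nonneg_right (hkmin j (Finset.mem_univ j)) (sq_nonneg _)
        _ = w j ^ 2 := by rw [hw]; ring
    have h4 : (ε * lamMin (Cᵀ * C)) * ∑ i, v i ^ 2 ≤ μ * ∑ i, v i ^ 2 := by
      rw [h1]
      calc (ε * lamMin (Cᵀ * C)) * ∑ i, v i ^ 2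
          = lamMin (Cᵀ * C) * (ε * ∑ i, v i ^ 2) := by ring
        _ ≤ lamMin (Cᵀ * C) * ∑ j, w j ^ 2 :=
            mul_le_mul_of_nonneg_left h3 hq.le
        _ ≤ ∑ i, ((C *ᵥ w) i) ^ 2 := h2
    exact le_of_mul_le_mul_right h4 hS
  -- 1 ≤ ε * lamMax (Cᵀ * C)
  have hone : 1 ≤ ε * lamMax (Cᵀ * C) := by
    set v0 : Fin n → ℝ := fun j => if j = k then 1 else 0 with hv0
    have hray := rayleigh_le hMd v0
    rw [dot_gram] at hray
    have hsingle : ∑ j, v0 j ^ 2 = 1 := by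
      simp [hv0, ite_pow]
    have hCv0 : ∀ i, (C *ᵥ v0) i = C i k := by
      intro i
      simp [Matrix.mulVec, dotProduct, hv0, mul_ite, mul_one, mul_zero]
    have hCk : ∑ i, ((C *ᵥ v0) i) ^ 2 = d k ^ 2 * ∑ i, A i k ^ 2 := by
      simp_rw [hCv0]
      rw [Finset.mul_sum]
      refine Finset.sum_congr rfl fun i _ => ?_
      rw [hC]
      ring
    have hεk : ε * (d k ^ 2 * ∑ i, A i k ^ 2) = 1 := by
      have hε2 : ε = D k ^ 2 / d k ^ 2 := by rw [hεdef, hEdef, div_pow]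
      rw [hε2]
      rw [div_mul_eq_mul_div, show D k ^ 2 * (d k ^ 2 * ∑ i, A i k ^ 2)
          = (D k ^ 2 * ∑ i, A i k ^ 2) * d k ^ 2 from by ring,
        mul_div_assoc, div_self (pow_ne_zero 2 (hd k)), mul_one, hD2 k]
    calc (1:ℝ) = ε * (d k ^ 2 * ∑ i, A i k ^ 2) := hεk.symm
      _ ≤ ε * lamMax (Cᵀ * C) := by
          apply mul_le_mul_of_nonneg_left _ hε.le
          rw [hCk] at hray
          rw [hsingle] at hray
          linarith
  -- combine
  have hb : 0 < lamMin (Bᵀ * B) := lt_of_lt_of_le (mul_pos hε hq) hminD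
  have hp : 0 < lamMax (Cᵀ * C) := by nlinarith
  have hratio : lamMax (Bᵀ * B) / lamMin (Bᵀ * B)
      ≤ n * (lamMax (Cᵀ * C) / lamMin (Cᵀ * C)) := by
    rw [div_le_iff₀ hb]
    have hr : lamMin (Cᵀ * C) * (lamMax (Cᵀ * C) / lamMin (Cᵀ * C)) = lamMax (Cᵀ * C) := by
      field_simp
    set r := lamMax (Cᵀ * C) / lamMin (Cᵀ * C) with hrdef
    have hrpos : 0 ≤ r := div_nonneg hp.le hq.le
    calc lamMax (Bᵀ * B) ≤ (n : ℝ) := hmaxD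
      _ = (n : ℝ) * 1 := by ring
      _ ≤ (n : ℝ) * (ε * lamMax (Cᵀ * C)) :=
          mul_le_mul_of_nonneg_left hone (Nat.cast_nonneg n)
      _ = (n : ℝ) * r * (ε * lamMin (Cᵀ * C)) := by rw [← hr]; ring
      _ ≤ (n : ℝ) * r * lamMin (Bᵀ * B) := by
          apply mul_le_mul_of_nonneg_left hminD
          positivity
  unfold condFull
  calc Real.sqrt (lamMax (Bᵀ * B) / lamMin (Bᵀ * B))
      ≤ Real.sqrt (n * (lamMax (Cᵀ * C) / lamMin (Cᵀ * C))) := Real.sqrt_le_sqrt hratio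
    _ = Real.sqrt n * Real.sqrt (lamMax (Cᵀ * C) / lamMin (Cᵀ * C)) :=
        Real.sqrt_mul (Nat.cast_nonneg n) _

/-- van der Sluis: scaling the columns of a full column rank matrix to unit norm
yields a condition number within √n of the optimal diagonal scaling. -/
theorem stmt5 {m n : ℕ} (A : Matrix (Fin m) (Fin n) ℝ) (hrank : A.rank = n)
    (hcol : ∀ j, (∑ i, (A i j) ^ 2) ≠ 0)
    (D : Fin n → ℝ) (hD : ∀ j, D j = (Real.sqrt (∑ i, (A i j) ^ 2))⁻¹) :
    condFull (A * Matrix.diagonal D) ≤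
      Real.sqrt n *
        sInf {c | ∃ d : Fin n → ℝ, (∀ j, d j ≠ 0) ∧ c = condFull (A * Matrix.diagonal d)} := by
  rcases Nat.eq_zero_or_pos n with hn | hn
  · subst hn
    have heigs : ∀ X : Matrix (Fin 0) (Fin 0) ℝ, eigs X = ∅ := by
      intro X
      ext μ
      simp only [eigs, Set.mem_setOf_eq, Set.mem_empty_iff_false, iff_false]
      rintro ⟨v, hv, -⟩
      exact hv (Subsingleton.elim v 0)
    simp [condFull, lamMax, lamMin, heigs, Real.sSup_empty, Real.sInf_empty]
  · have hcolN : ∀ j, 0 < ∑ i, A i j ^ 2 := fun j =>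
      lt_of_le_of_ne (Finset.sum_nonneg fun i _ => sq_nonneg _) (Ne.symm (hcol j))
    have hker : ∀ v : Fin n → ℝ, A *ᵥ v = 0 → v = 0 := by
      have hbot : LinearMap.ker A.mulVecLin = ⊥ := by
        have h1 := LinearMap.finrank_range_add_finrank_ker A.mulVecLin
        rw [show Module.finrank ℝ (LinearMap.range A.mulVecLin) = n from hrank] at h1
        simp only [Module.finrank_pi, Fintype.card_fin] at h1
        exact Submodule.finrank_eq_zero.mp (by omega)
      intro v hv
      exact Matrix.ker_mulVecLin_eq_bot_iff.mp hbot v hv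
    have hDpos : ∀ j, 0 < D j := fun j => by
      rw [hD j]; exact inv_pos.mpr (Real.sqrt_pos.mpr (hcolN j))
    set S := {c | ∃ d : Fin n → ℝ, (∀ j, d j ≠ 0) ∧ c = condFull (A * Matrix.diagonal d)}
      with hSdef
    have hSne : S.Nonempty := ⟨condFull (A * Matrix.diagonal D),
      D, fun j => (hDpos j).ne', rfl⟩
    have hsqrt : 0 < Real.sqrt n := Real.sqrt_pos.mpr (by exact_mod_cast hn)
    have hle : condFull (A * Matrix.diagonal D) / Real.sqrt n ≤ sInf S := by
      apply le_csInf hSne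
      rintro c ⟨d, hd, rfl⟩
      rw [div_le_iff₀ hsqrt]
      rw [mul_comm]
      exact key hn A hker hcolN D hD d hd
    calc condFull (A * Matrix.diagonal D)
        = Real.sqrt n * (condFull (A * Matrix.diagonal D) / Real.sqrt n) := by
          field_simp
      _ ≤ Real.sqrt n * sInf S := mul_le_mul_of_nonneg_left hle hsqrt.le
end
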